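/- Let n ≥ 2 and let P ∈ ℝ^{d×n} be a Haar–Stiefel matrix with 3 ≤ d ≤ n. Then for all unit vectors u, v ∈ ℝⁿ with ⟨u,v⟩ < 1, the expected section-efficiency ratio satisfies d/n − 4(n−d)/(n(n−1)) ≤ E[Γ(P;u,v)] ≤ d/n. -/

import Mathlib

set_option maxHeartbeats 1000000

open MeasureTheory Matrix

/-- Measurable space structure on real matrices (as a pi type). -/
instance {d n : ℕ} : MeasurableSpace (Matrix (Fin d) (Fin n) ℝ) :=
  inferInstanceAs (MeasurableSpace (Fin d → Fin n → ℝ))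

/-- Euclidean inner product on `m → ℝ`. -/
noncomputable def dotR {m : Type*} [Fintype m] (x y : m → ℝ) : ℝ := ∑ i, x i * y i

/-- Euclidean norm on `m → ℝ`. -/
noncomputable def norR {m : Type*} [Fintype m] (x : m → ℝ) : ℝ := Real.sqrt (dotR x x)

/-- The section-efficiency ratio Γ(P;u,v) = (‖Pu‖‖Pv‖ − ⟨Pu,Pv⟩)/(1 − ⟨u,v⟩). -/
noncomputable def Gam {d n : ℕ} (P : Matrix (Fin d) (Fin n) ℝ) (u v : Fin n → ℝ) : ℝ :=
  (norR (P.mulVec u) * norR (P.mulVec v) - dotR (P.mulVec u) (P.mulVec v)) / (1 - dotR u v)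

/-- `μ` is the Haar–Stiefel distribution: a probability measure supported on the
Stiefel manifold `{P : P Pᵀ = I_d}` that is invariant under right multiplication
by any orthogonal matrix.  (This characterizes the law of the first `d` rows of a
Haar-distributed orthogonal matrix.) -/
def IsHaarStiefel {d n : ℕ} (μ : Measure (Matrix (Fin d) (Fin n) ℝ)) : Prop :=
  IsProbabilityMeasure μ ∧
  (∀ᵐ P ∂μ, P * Pᵀ = 1) ∧
  ∀ Q : Matrix (Fin n) (Fin n) ℝ, Q ∈ Matrix.orthogonalGroup (Fin n) ℝ →
    μ.map (fun P => P * Q) = μ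

namespace SecEff

variable {d n : ℕ}

lemma dotR_self_nonneg {m : Type*} [Fintype m] (x : m → ℝ) : 0 ≤ dotR x x :=
  Finset.sum_nonneg fun i _ => mul_self_nonneg _

lemma norR_nonneg {m : Type*} [Fintype m] (x : m → ℝ) : 0 ≤ norR x := Real.sqrt_nonneg _

lemma norR_sq {m : Type*} [Fintype m] (x : m → ℝ) : norR x * norR x = dotR x x :=
  Real.mul_self_sqrt (dotR_self_nonneg x)

lemma dotR_sq_le {m : Type*} [Fintype m] (x y : m → ℝ) :
    (dotR x y)^2 ≤ dotR x x * dotR y y := by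
  have h := Finset.sum_mul_sq_le_sq_mul_sq Finset.univ x y
  simp only [dotR, pow_two] at h ⊢
  simpa [pow_two] using h

lemma dotR_le_norR {m : Type*} [Fintype m] (x y : m → ℝ) : dotR x y ≤ norR x * norR y := by
  calc dotR x y ≤ |dotR x y| := le_abs_self _
    _ = Real.sqrt ((dotR x y)^2) := (Real.sqrt_sq_eq_abs _).symm
    _ ≤ Real.sqrt (dotR x x * dotR y y) := Real.sqrt_le_sqrt (dotR_sq_le x y)
    _ = norR x * norR y := by rw [norR, norR, ← Real.sqrt_mul (dotR_self_nonneg x)]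

/-- Entries of `PᵀP`. -/
noncomputable def Mf (P : Matrix (Fin d) (Fin n) ℝ) (j k : Fin n) : ℝ := ∑ i, P i j * P i k

lemma Mf_nonneg (P : Matrix (Fin d) (Fin n) ℝ) (j : Fin n) : 0 ≤ Mf P j j :=
  Finset.sum_nonneg fun i _ => mul_self_nonneg _

lemma Mf_sq_le (P : Matrix (Fin d) (Fin n) ℝ) (j k : Fin n) :
    (Mf P j k)^2 ≤ Mf P j j * Mf P k k := by
  have h := Finset.sum_mul_sq_le_sq_mul_sq Finset.univ (fun i => P i j) (fun i => P i k)
  simp only [Mf]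
  simpa [pow_two] using h

lemma row_orth {P : Matrix (Fin d) (Fin n) ℝ} (hP : P * Pᵀ = 1) (r t : Fin d) :
    ∑ j, P r j * P t j = if r = t then 1 else 0 := by
  have h := congrFun (congrFun hP r) t
  simpa [Matrix.mul_apply, Matrix.transpose_apply, Matrix.one_apply] using h

lemma trace_col {P : Matrix (Fin d) (Fin n) ℝ} (hP : P * Pᵀ = 1) :
    ∑ j, Mf P j j = (d : ℝ) := by
  calc ∑ j, Mf P j j = ∑ j : Fin n, ∑ i : Fin d, P i j * P i j := rfl
    _ = ∑ i : Fin d, ∑ j : Fin n, P i j * P i j := Finset.sum_comm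
    _ = ∑ _i : Fin d, (1:ℝ) := by
        refine Finset.sum_congr rfl fun i _ => ?_
        simpa using row_orth hP i i
    _ = (d : ℝ) := by simp

lemma Mf_diag_le {P : Matrix (Fin d) (Fin n) ℝ} (hP : P * Pᵀ = 1) (j : Fin n) :
    Mf P j j ≤ (d : ℝ) := by
  rw [← trace_col hP]
  exact Finset.single_le_sum (fun k _ => Mf_nonneg P k) (Finset.mem_univ j)

lemma col_sq_sum {P : Matrix (Fin d) (Fin n) ℝ} (hP : P * Pᵀ = 1) (j : Fin n) :
    ∑ k, (Mf P j k)^2 = Mf P j j := by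
  calc ∑ k, (Mf P j k)^2
      = ∑ k, ∑ r, ∑ t, (P r j * P t j) * (P r k * P t k) := by
        refine Finset.sum_congr rfl fun k _ => ?_
        rw [Mf, pow_two, Finset.sum_mul_sum]
        exact Finset.sum_congr rfl fun r _ => Finset.sum_congr rfl fun t _ => by ring
    _ = ∑ r, ∑ t, ∑ k, (P r j * P t j) * (P r k * P t k) := by
        rw [Finset.sum_comm]
        exact Finset.sum_congr rfl fun r _ => Finset.sum_comm
    _ = ∑ r, ∑ t, (P r j * P t j) * (if r = t then 1 else 0) := by
        refine Finset.sum_congr rfl fun r _ => Finset.sum_congr rfl fun t _ => ?_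
        rw [← Finset.mul_sum, row_orth hP r t]
    _ = ∑ r, P r j * P r j := by
        refine Finset.sum_congr rfl fun r _ => ?_
        simp
    _ = Mf P j j := rfl

lemma col_sq_sum_erase {P : Matrix (Fin d) (Fin n) ℝ} (hP : P * Pᵀ = 1) (j : Fin n) :
    ∑ k ∈ Finset.univ.erase j, (Mf P j k)^2 = Mf P j j - (Mf P j j)^2 := by
  have h := Finset.sum_erase_add Finset.univ (fun k => (Mf P j k)^2) (Finset.mem_univ j)
  rw [col_sq_sum hP] at h
  nlinarith [h]

lemma Mf_off_sq_le {P : Matrix (Fin d) (Fin n) ℝ} (hP : P * Pᵀ = 1) {j k : Fin n}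
    (hjk : k ≠ j) : (Mf P j k)^2 ≤ Mf P j j - (Mf P j j)^2 := by
  rw [← col_sq_sum_erase hP j]
  exact Finset.single_le_sum (f := fun i => (Mf P j i)^2) (fun i _ => sq_nonneg _)
    (Finset.mem_erase.mpr ⟨hjk, Finset.mem_univ k⟩)

/-- The vector `c·e_j + s·e_k`. -/
noncomputable def uv (c s : ℝ) (j k : Fin n) : Fin n → ℝ :=
  fun i => (if i = j then c else 0) + (if i = k then s else 0)

lemma mulVec_uv (P : Matrix (Fin d) (Fin n) ℝ) (c s : ℝ) (j k : Fin n) :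
    P.mulVec (uv c s j k) = fun r => c * P r j + s * P r k := by
  funext r
  simp only [Matrix.mulVec, dotProduct, uv, mul_add, mul_ite, mul_zero,
    Finset.sum_add_distrib, Finset.sum_ite_eq', Finset.mem_univ, if_true]
  ring

lemma dotR_comb (P : Matrix (Fin d) (Fin n) ℝ) (c s c' s' : ℝ) (j k : Fin n) :
    dotR (fun r => c * P r j + s * P r k) (fun r => c' * P r j + s' * P r k)
      = c*c'*Mf P j j + (c*s'+s*c')*Mf P j k + s*s'*Mf P k k := by
  have h : ∀ r : Fin d, (c * P r j + s * P r k) * (c' * P r j + s' * P r k)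
      = c*c'*(P r j * P r j) + (c*s'+s*c')*(P r j * P r k) + s*s'*(P r k * P r k) := by
    intro r; ring
  simp only [dotR, h, Finset.sum_add_distrib, ← Finset.mul_sum]
  rfl

lemma dotR_uv (c s c' s' : ℝ) {j k : Fin n} (hjk : j ≠ k) :
    dotR (uv c s j k) (uv c' s' j k) = c*c' + s*s' := by
  have h : ∀ i : Fin n, uv c s j k i * uv c' s' j k i
      = (if i = j then c*c' else 0) + (if i = k then s*s' else 0) := by
    intro i
    by_cases h1 : i = j <;> by_cases h2 : i = k
    · exact absurd (h1 ▸ h2) hjk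
    · simp [uv, h1, h2, hjk]
    · simp [uv, h1, h2, Ne.symm hjk]
    · simp [uv, h1, h2]
  simp only [dotR, h, Finset.sum_add_distrib, Finset.sum_ite_eq', Finset.mem_univ, if_true]

section Pointwise

variable {c s : ℝ} {j k : Fin n} (P : Matrix (Fin d) (Fin n) ℝ)

lemma gam_le (hjk : j ≠ k) (hs : 0 < s) (hcs : c^2 + s^2 = 1) :
    Gam P (uv c s j k) (uv c (-s) j k) ≤ Mf P k k := by
  have hden : 1 - dotR (uv c s j k) (uv c (-s) j k) = 2*s^2 := by
    rw [dotR_uv _ _ _ _ hjk]; nlinarith [hcs]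
  rw [Gam, hden, div_le_iff₀ (by positivity), mulVec_uv, mulVec_uv]
  set x : Fin d → ℝ := fun r => c * P r j + s * P r k with hx
  set y : Fin d → ℝ := fun r => c * P r j + (-s) * P r k with hy
  have hA : norR x * norR x = c*c*Mf P j j + (c*s+s*c)*Mf P j k + s*s*Mf P k k := by
    rw [norR_sq, hx, dotR_comb]
  have hB : norR y * norR y = c*c*Mf P j j + (c*(-s)+(-s)*c)*Mf P j k + (-s)*(-s)*Mf P k k := by
    rw [norR_sq, hy, dotR_comb]
  have hZ : dotR x y = c*c*Mf P j j + (c*(-s)+s*c)*Mf P j k + s*(-s)*Mf P k k := by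
    rw [hx, hy, dotR_comb]
  nlinarith [sq_nonneg (norR x - norR y), norR_nonneg x, norR_nonneg y]

lemma gam_ge (hjk : j ≠ k) (hc : 0 ≤ c) (hs : 0 < s) (hcs : c^2 + s^2 = 1) :
    Mf P k k - 2 * ((Mf P j k)^2 / Mf P j j) ≤ Gam P (uv c s j k) (uv c (-s) j k) := by
  have hden : 1 - dotR (uv c s j k) (uv c (-s) j k) = 2*s^2 := by
    rw [dotR_uv _ _ _ _ hjk]; nlinarith [hcs]
  rw [Gam, hden, le_div_iff₀ (by positivity), mulVec_uv, mulVec_uv]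
  set x : Fin d → ℝ := fun r => c * P r j + s * P r k with hx
  set y : Fin d → ℝ := fun r => c * P r j + (-s) * P r k with hy
  set a := norR x with ha
  set b := norR y with hb
  have hA : a * a = c*c*Mf P j j + (c*s+s*c)*Mf P j k + s*s*Mf P k k := by
    rw [ha, norR_sq, hx, dotR_comb]
  have hB : b * b = c*c*Mf P j j + (c*(-s)+(-s)*c)*Mf P j k + (-s)*(-s)*Mf P k k := by
    rw [hb, norR_sq, hy, dotR_comb]
  have hZ : dotR x y = c*c*Mf P j j + (c*(-s)+s*c)*Mf P j k + s*(-s)*Mf P k k := by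
    rw [hx, hy, dotR_comb]
  have ha0 : 0 ≤ a := norR_nonneg x
  have hb0 : 0 ≤ b := norR_nonneg y
  -- key: (a-b)^2 ≤ 8 s^2 * ((Mf P j k)^2 / Mf P j j)
  have key : (a - b)^2 ≤ 8 * s^2 * ((Mf P j k)^2 / Mf P j j) := by
    by_cases hpos : 0 < c ∧ 0 < Mf P j j
    · obtain ⟨hcpos, hMpos⟩ := hpos
      have hc' : c ≠ 0 := ne_of_gt hcpos
      have hM' : Mf P j j ≠ 0 := ne_of_gt hMpos
      have h1 : 2*c^2*(Mf P j j) ≤ (a+b)*(a+b) := by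
        nlinarith [Mf_nonneg P k, mul_nonneg ha0 hb0]
      have h2 : ((a-b)*(a+b))^2 = (2*(c*s)*(2*Mf P j k))^2 := by nlinarith []
      -- (a-b)^2 * (2 c^2 Mjj) ≤ (a-b)^2 (a+b)^2 = 16 c^2 s^2 Mjk^2
      have h3 : (a-b)^2 * (2*c^2*Mf P j j) ≤ 16*c^2*s^2*(Mf P j k)^2 := by
        calc (a-b)^2 * (2*c^2*Mf P j j) ≤ (a-b)^2 * ((a+b)*(a+b)) :=
              mul_le_mul_of_nonneg_left h1 (sq_nonneg _)
          _ = ((a-b)*(a+b))^2 := by ring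
          _ = 16*c^2*s^2*(Mf P j k)^2 := by rw [h2]; ring
      calc (a-b)^2 ≤ (16*c^2*s^2*(Mf P j k)^2)/(2*c^2*Mf P j j) := by
            rw [le_div_iff₀ (by positivity)]; exact h3
        _ = 8 * s^2 * ((Mf P j k)^2 / Mf P j j) := by field_simp; ring
    · -- degenerate: a = b
      have hab : a = b := by
        have hAB : a * a = b * b := by
          rcases not_and_or.mp hpos with hc0 | hM0
          · have : c = 0 := le_antisymm (not_lt.mp hc0) hc
            rw [hA, hB, this]; ring
          · have hM : Mf P j j = 0 := le_antisymm (not_lt.mp hM0) (Mf_nonneg P j)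
            have : (Mf P j k)^2 ≤ 0 := by
              have := Mf_sq_le P j k
              rw [hM] at this; nlinarith [this]
            have hjk0 : Mf P j k = 0 := by nlinarith [sq_nonneg (Mf P j k)]
            rw [hA, hB, hM, hjk0]; ring
        nlinarith [hAB, ha0, hb0]
      rw [hab]
      have : (0:ℝ) ≤ 8 * s^2 * ((Mf P j k)^2 / Mf P j j) :=
        mul_nonneg (by positivity) (div_nonneg (sq_nonneg _) (Mf_nonneg P j))
      simpa using this
  -- ab - Z = 2 s^2 Mkk - (a-b)^2/2
  nlinarith [key, hA, hB, hZ]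

end Pointwise
section Meas

lemma meas_entry (i : Fin d) (j : Fin n) :
    Measurable (fun P : Matrix (Fin d) (Fin n) ℝ => P i j) :=
  (measurable_pi_apply j).comp (measurable_pi_apply i)

lemma meas_Mf (j k : Fin n) : Measurable (fun P : Matrix (Fin d) (Fin n) ℝ => Mf P j k) :=
  Finset.measurable_sum _ fun i _ => (meas_entry i j).mul (meas_entry i k)

lemma meas_mulQ (Q : Matrix (Fin n) (Fin n) ℝ) :
    Measurable (fun P : Matrix (Fin d) (Fin n) ℝ => P * Q) := by
  refine measurable_pi_lambda _ fun i => measurable_pi_lambda _ fun j => ?_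
  simp only [Matrix.mul_apply]
  exact Finset.measurable_sum _ fun k _ => (meas_entry i k).mul_const _

lemma meas_dotR_mulVec (u v : Fin n → ℝ) :
    Measurable (fun P : Matrix (Fin d) (Fin n) ℝ => dotR (P.mulVec u) (P.mulVec v)) := by
  simp only [dotR, Matrix.mulVec, dotProduct]
  exact Finset.measurable_sum _ fun i _ =>
    (Finset.measurable_sum _ fun j _ => (meas_entry i j).mul_const _).mul
    (Finset.measurable_sum _ fun j _ => (meas_entry i j).mul_const _)

lemma meas_Gam (u v : Fin n → ℝ) :
    Measurable (fun P : Matrix (Fin d) (Fin n) ℝ => Gam P u v) := by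
  unfold Gam norR
  exact (((Real.continuous_sqrt.measurable.comp (meas_dotR_mulVec u u)).mul
    (Real.continuous_sqrt.measurable.comp (meas_dotR_mulVec v v))).sub
    (meas_dotR_mulVec u v)).div_const _

end Meas

section Perm

/-- Permutation matrix. -/
noncomputable def permM (σ : Equiv.Perm (Fin n)) : Matrix (Fin n) (Fin n) ℝ :=
  Matrix.of fun j k => if σ j = k then 1 else 0

lemma permM_mem (σ : Equiv.Perm (Fin n)) : permM σ ∈ Matrix.orthogonalGroup (Fin n) ℝ := by
  rw [Matrix.mem_orthogonalGroup_iff]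
  ext i k
  simp only [Matrix.mul_apply, Matrix.star_apply, Matrix.star_eq_conjTranspose,
    Matrix.conjTranspose_apply, permM, Matrix.of_apply, star_trivial]
  simp only [ite_mul, one_mul, zero_mul, Finset.sum_ite_eq', Finset.mem_univ, if_true]
  by_cases h : i = k
  · simp [h, Matrix.one_apply]
  · have : ¬ (σ k = σ i) := fun hh => h (σ.injective hh).symm
    simp [h, this, Matrix.one_apply]

lemma Mf_mul_permM (P : Matrix (Fin d) (Fin n) ℝ) (σ : Equiv.Perm (Fin n)) (a b : Fin n) :
    Mf (P * permM σ) a b = Mf P (σ.symm a) (σ.symm b) := by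
  have hcol : ∀ (i : Fin d) (c : Fin n), (P * permM σ) i c = P i (σ.symm c) := by
    intro i c
    simp only [Matrix.mul_apply, permM, Matrix.of_apply, mul_ite, mul_one, mul_zero]
    rw [Finset.sum_eq_single_of_mem (σ.symm c) (Finset.mem_univ _)
      (fun j _ hj => by
        have : ¬ (σ j = c) := fun hh => hj (by rw [← hh, Equiv.symm_apply_apply])
        simp [this])]
    simp
  simp only [Mf, hcol]

end Perm

section Integrals

variable {μ : Measure (Matrix (Fin d) (Fin n) ℝ)} [IsProbabilityMeasure μ]

variable (μ) in
def HStief : Prop := (∀ᵐ P ∂μ, P * Pᵀ = 1) ∧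
  ∀ Q : Matrix (Fin n) (Fin n) ℝ, Q ∈ Matrix.orthogonalGroup (Fin n) ℝ →
    μ.map (fun P => P * Q) = μ

lemma int_inv (hμ : HStief μ) {Q : Matrix (Fin n) (Fin n) ℝ} (hQ : Q ∈ Matrix.orthogonalGroup (Fin n) ℝ)
    {f : Matrix (Fin d) (Fin n) ℝ → ℝ} (hf : AEStronglyMeasurable f μ) :
    ∫ P, f (P * Q) ∂μ = ∫ P, f P ∂μ := by
  conv_rhs => rw [← hμ.2 Q hQ]
  rw [integral_map (meas_mulQ Q).aemeasurable]
  rwa [hμ.2 Q hQ]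

lemma integrable_Mf_diag (hμ : HStief μ) (j : Fin n) : Integrable (fun P => Mf P j j) μ := by
  refine Integrable.mono' (integrable_const (d : ℝ)) (meas_Mf j j).aestronglyMeasurable ?_
  filter_upwards [hμ.1] with P hP
  rw [Real.norm_eq_abs, abs_of_nonneg (Mf_nonneg P j)]
  exact Mf_diag_le hP j

lemma int_Mf_diag_eq (hμ : HStief μ) (j k : Fin n) : ∫ P, Mf P j j ∂μ = ∫ P, Mf P k k ∂μ := by
  have h := int_inv hμ (permM_mem (Equiv.swap j k))
    (f := fun P => Mf P k k) (meas_Mf k k).aestronglyMeasurable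
  rw [← h]
  refine integral_congr_ae (Filter.Eventually.of_forall fun P => ?_)
  show Mf P j j = Mf (P * permM (Equiv.swap j k)) k k
  rw [Mf_mul_permM]
  simp [Equiv.symm_swap, Equiv.swap_apply_right]

lemma int_Mf_diag (hμ : HStief μ) (hn : 0 < n) (j : Fin n) : ∫ P, Mf P j j ∂μ = (d : ℝ) / n := by
  have hsum : ∑ k : Fin n, ∫ P, Mf P k k ∂μ = (d : ℝ) := by
    rw [← integral_finset_sum _ (fun k _ => integrable_Mf_diag hμ k)]
    rw [integral_congr_ae (g := fun _ => (d:ℝ))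
      (by filter_upwards [hμ.1] with P hP; exact trace_col hP)]
    simp
  have hall : ∀ k : Fin n, ∫ P, Mf P k k ∂μ = ∫ P, Mf P j j ∂μ :=
    fun k => int_Mf_diag_eq hμ k j
  rw [Finset.sum_congr rfl (fun k _ => hall k), Finset.sum_const] at hsum
  simp only [Finset.card_univ, Fintype.card_fin, nsmul_eq_mul] at hsum
  field_simp
  rw [mul_comm]
  exact hsum

end Integrals

variable {μ : Measure (Matrix (Fin d) (Fin n) ℝ)} [IsProbabilityMeasure μ]

/-- `W = M_{jk}^2 / M_{jj}`. -/
noncomputable def Wf (P : Matrix (Fin d) (Fin n) ℝ) (j k : Fin n) : ℝ :=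
  (Mf P j k)^2 / Mf P j j

lemma Wf_nonneg (P : Matrix (Fin d) (Fin n) ℝ) (j k : Fin n) : 0 ≤ Wf P j k :=
  div_nonneg (sq_nonneg _) (Mf_nonneg P j)

lemma meas_Wf (j k : Fin n) : Measurable (fun P : Matrix (Fin d) (Fin n) ℝ => Wf P j k) :=
  ((meas_Mf j k).pow_const 2).div (meas_Mf j j)

lemma Wf_le_one {P : Matrix (Fin d) (Fin n) ℝ} (hP : P * Pᵀ = 1) {j k : Fin n}
    (hjk : k ≠ j) : Wf P j k ≤ 1 := by
  rcases eq_or_lt_of_le (Mf_nonneg P j) with h0 | hpos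
  · rw [Wf, ← h0, div_zero]; norm_num
  · rw [Wf, div_le_one hpos]
    nlinarith [Mf_off_sq_le hP hjk, sq_nonneg (Mf P j j)]

lemma sum_Wf_le {P : Matrix (Fin d) (Fin n) ℝ} (hP : P * Pᵀ = 1) (j : Fin n) :
    ∑ k ∈ Finset.univ.erase j, Wf P j k ≤ 1 - Mf P j j := by
  rcases eq_or_lt_of_le (Mf_nonneg P j) with h0 | hpos
  · have : ∀ k ∈ Finset.univ.erase j, Wf P j k = 0 := by
      intro k _; rw [Wf, ← h0, div_zero]
    rw [Finset.sum_congr rfl this, Finset.sum_const, smul_zero, ← h0]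
    norm_num
  · simp only [Wf, ← Finset.sum_div]
    rw [col_sq_sum_erase hP, div_le_iff₀ hpos]
    nlinarith []

lemma integrable_Wf (hμ : HStief μ) {j k : Fin n} (hjk : k ≠ j) :
    Integrable (fun P => Wf P j k) μ := by
  refine Integrable.mono' (integrable_const (1 : ℝ)) (meas_Wf j k).aestronglyMeasurable ?_
  filter_upwards [hμ.1] with P hP
  rw [Real.norm_eq_abs, abs_of_nonneg (Wf_nonneg P j k)]
  exact Wf_le_one hP hjk

lemma int_Wf_eq (hμ : HStief μ) {j k k' : Fin n} (hk : k ≠ j) (hk' : k' ≠ j) :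
    ∫ P, Wf P j k ∂μ = ∫ P, Wf P j k' ∂μ := by
  have h := int_inv hμ (permM_mem (Equiv.swap k k'))
    (f := fun P => Wf P j k') (meas_Wf j k').aestronglyMeasurable
  rw [← h]
  refine integral_congr_ae (Filter.Eventually.of_forall fun P => ?_)
  show Wf P j k = Wf (P * permM (Equiv.swap k k')) j k'
  rw [Wf, Wf, Mf_mul_permM, Mf_mul_permM]
  rw [Equiv.symm_swap, Equiv.swap_apply_right,
    Equiv.swap_apply_of_ne_of_ne (Ne.symm hk) (Ne.symm hk')]

lemma int_Wf_le (hμ : HStief μ) (hn : 1 < n) (hdn : d ≤ n) {j k : Fin n} (hjk : k ≠ j) :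
    ∫ P, Wf P j k ∂μ ≤ ((n:ℝ) - d) / (n * (n - 1)) := by
  have hn0 : 0 < n := by omega
  have hsum : ∑ k' ∈ Finset.univ.erase j, ∫ P, Wf P j k' ∂μ ≤ 1 - (d:ℝ)/n := by
    rw [← integral_finset_sum _ (fun k' hk' =>
      integrable_Wf hμ (Finset.mem_erase.mp hk').1)]
    have hle : (∫ P, ∑ k' ∈ Finset.univ.erase j, Wf P j k' ∂μ)
        ≤ ∫ P, (1 - Mf P j j) ∂μ := by
      refine integral_mono_ae
        (integrable_finset_sum _ (fun k' hk' => integrable_Wf hμ (Finset.mem_erase.mp hk').1))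
        ((integrable_const (1:ℝ)).sub (integrable_Mf_diag hμ j)) ?_
      filter_upwards [hμ.1] with P hP
      exact sum_Wf_le hP j
    have hval : ∫ P, ((1:ℝ) - Mf P j j) ∂μ = 1 - (d:ℝ)/n := by
      rw [integral_sub (integrable_const _) (integrable_Mf_diag hμ j),
        int_Mf_diag hμ hn0 j]
      simp
    linarith [hle, hval.symm.le, hval.le]
  have hall : ∀ k' ∈ Finset.univ.erase j, ∫ P, Wf P j k' ∂μ = ∫ P, Wf P j k ∂μ :=
    fun k' hk' => int_Wf_eq hμ (Finset.mem_erase.mp hk').1 hjk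
  rw [Finset.sum_congr rfl hall, Finset.sum_const, Finset.card_erase_of_mem (Finset.mem_univ j),
    Finset.card_univ, Fintype.card_fin, nsmul_eq_mul] at hsum
  have hn1 : (0:ℝ) < (n:ℝ) - 1 := by
    have : (1:ℝ) < (n:ℝ) := by exact_mod_cast hn
    linarith
  have hcast : ((n - 1 : ℕ) : ℝ) = (n:ℝ) - 1 := by
    have : (1:ℕ) ≤ n := by omega
    push_cast [this]; ring
  rw [hcast] at hsum
  have hnpos : (0:ℝ) < n := by exact_mod_cast hn0
  have hsum' : ((n:ℝ) - 1) * (∫ P, Wf P j k ∂μ) * n ≤ (1 - (d:ℝ)/n) * n :=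
    mul_le_mul_of_nonneg_right hsum hnpos.le
  have heq : (1 - (d:ℝ)/n) * n = (n:ℝ) - d := by field_simp
  rw [le_div_iff₀ (mul_pos hnpos hn1)]
  nlinarith [hsum', heq]
lemma dotR_lin {m : Type*} [Fintype m] (x y : m → ℝ) (α β γ δ : ℝ) :
    dotR (fun i => α * x i + β * y i) (fun i => γ * x i + δ * y i)
      = α*γ*dotR x x + (α*δ+β*γ)*dotR x y + β*δ*dotR y y := by
  have h : ∀ i, (α * x i + β * y i) * (γ * x i + δ * y i)
      = α*γ*(x i * x i) + (α*δ+β*γ)*(x i * y i) + β*δ*(y i * y i) := fun i => by ring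
  simp only [dotR, h, Finset.sum_add_distrib, ← Finset.mul_sum]

lemma inner_eq (x y : EuclideanSpace ℝ (Fin n)) :
    (inner ℝ x y : ℝ) = ∑ j, x j * y j := by
  simp [PiLp.inner_apply, RCLike.inner_apply, starRingEnd_apply, mul_comm]

/-- Matrix whose rows are given vectors. -/
noncomputable def rowM (b : Fin n → EuclideanSpace ℝ (Fin n)) : Matrix (Fin n) (Fin n) ℝ :=
  Matrix.of fun i j => b i j

lemma rowM_mem (b : OrthonormalBasis (Fin n) ℝ (EuclideanSpace ℝ (Fin n))) :
    rowM (⇑b) ∈ Matrix.orthogonalGroup (Fin n) ℝ := by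
  rw [Matrix.mem_orthogonalGroup_iff]
  ext i k
  have hb := orthonormal_iff_ite.mp b.orthonormal i k
  rw [inner_eq] at hb
  simp only [Matrix.mul_apply, Matrix.star_apply, Matrix.star_eq_conjTranspose,
    Matrix.conjTranspose_apply, rowM, Matrix.of_apply, star_trivial, Matrix.transpose_apply]
  rw [hb]
  by_cases h : i = k <;> simp [h, Matrix.one_apply]

lemma rowM_mulVec (b : Fin n → EuclideanSpace ℝ (Fin n)) (x : Fin n → ℝ) (i : Fin n) :
    (rowM b).mulVec x i = ∑ j, b i j * x j := by
  simp [rowM, Matrix.mulVec, dotProduct]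

lemma exists_rot {i0 i1 : Fin n} (h01 : i0 ≠ i1) (u v : Fin n → ℝ)
    (hu : dotR u u = 1) (hv : dotR v v = 1) (huv : dotR u v < 1) :
    ∃ (Q : Matrix (Fin n) (Fin n) ℝ) (c s : ℝ),
      Q ∈ Matrix.orthogonalGroup (Fin n) ℝ ∧ 0 ≤ c ∧ 0 < s ∧ c^2 + s^2 = 1 ∧
      c^2 - s^2 = dotR u v ∧
      Q.mulVec u = uv c s i0 i1 ∧ Q.mulVec v = uv c (-s) i0 i1 := by
  classical
  set t := dotR u v with htdef
  have hnu : norR u = 1 := by rw [norR, hu, Real.sqrt_one]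
  have hnv : norR v = 1 := by rw [norR, hv, Real.sqrt_one]
  have ht1 : -1 ≤ t := by
    have h1 : dotR (fun i => -u i) v ≤ norR (fun i => -u i) * norR v := dotR_le_norR _ _
    have h2 : dotR (fun i => -u i) v = -t := by
      simp only [htdef, dotR, neg_mul, Finset.sum_neg_distrib]
    have h3 : norR (fun i => -u i) = norR u := by
      simp only [norR, dotR, neg_mul_neg]
    rw [h2, h3, hnu, hnv] at h1
    linarith
  set c := Real.sqrt ((1+t)/2) with hcdef
  set s := Real.sqrt ((1-t)/2) with hsdef
  have hc2 : c^2 = (1+t)/2 := Real.sq_sqrt (by linarith)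
  have hs2 : s^2 = (1-t)/2 := Real.sq_sqrt (by linarith)
  have hs : 0 < s := Real.sqrt_pos.mpr (by linarith)
  have hc : 0 ≤ c := Real.sqrt_nonneg _
  have hcs : c^2 + s^2 = 1 := by rw [hc2, hs2]; ring
  have hts : c^2 - s^2 = t := by rw [hc2, hs2]; ring
  have hcard : Module.finrank ℝ (EuclideanSpace ℝ (Fin n)) = Fintype.card (Fin n) := by
    simp [finrank_euclideanSpace_fin]
  set q : Fin n → ℝ := fun i => (1/(2*s)) * u i + (-(1/(2*s))) * v i with hqdef
  have hqq : dotR q q = 1 := by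
    rw [hqdef, dotR_lin, hu, hv, ← htdef]
    have : t = c^2 - s^2 := hts.symm
    rw [this]
    field_simp
    nlinarith [hcs, hs]
  by_cases hc0 : c = 0
  · -- t = -1, v = -u, s = 1
    have ht : t = -1 := by
      have : (0:ℝ) = (1+t)/2 := by rw [← hc2, hc0]; ring
      linarith
    have hs1 : s = 1 := by nlinarith [hs2, hs, ht]
    have hvu : ∀ i, v i = -u i := by
      have hsum : ∑ i, (u i + v i) * (u i + v i) = 0 := by
        have h := dotR_lin u v 1 1 1 1
        simp only [one_mul] at h
        have : dotR (fun i => u i + v i) (fun i => u i + v i) = 0 := by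
          rw [show (fun i => u i + v i) = (fun i => 1 * u i + 1 * v i) by funext i; ring]
          rw [dotR_lin, hu, hv, ← htdef, ht]; ring
        simpa [dotR] using this
      intro i
      have hz := (Finset.sum_eq_zero_iff_of_nonneg
        (fun j (_ : j ∈ Finset.univ) => mul_self_nonneg (u j + v j))).mp hsum i (Finset.mem_univ i)
      nlinarith [hz]
    -- orthonormal single family
    set w : Fin n → EuclideanSpace ℝ (Fin n) := fun _ => WithLp.toLp 2 q with hwdef
    have hortho : Orthonormal ℝ (Set.domRestrict {i1} w) := by
      rw [orthonormal_iff_ite]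
      rintro ⟨i, hi⟩ ⟨j, hj⟩
      simp only [Set.mem_singleton_iff] at hi hj
      subst hi; subst hj
      simp only [Set.domRestrict_apply, hwdef]
      rw [inner_eq]
      simpa [dotR] using hqq
    obtain ⟨b, hb⟩ := hortho.exists_orthonormalBasis_extension_of_card_eq hcard
    have hbi1 : (b i1).ofLp = q := by rw [hb i1 rfl]
    have hbite := orthonormal_iff_ite.mp b.orthonormal
    have hkey : ∀ i : Fin n, ∑ j, b i j * u j = if i = i1 then 1 else 0 := by
      intro i
      have h1 : (inner ℝ (b i) (b i1) : ℝ) = if i = i1 then 1 else 0 := hbite i i1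
      rw [inner_eq, hbi1] at h1
      rw [← h1]
      refine Finset.sum_congr rfl fun j _ => ?_
      have : q j = u j := by rw [hqdef]; simp only [hs1, hvu j]; ring
      rw [this]
    refine ⟨rowM ⇑b, c, s, rowM_mem b, hc, hs, hcs, hts, ?_, ?_⟩
    · funext i
      rw [rowM_mulVec, hkey i, uv, hc0, hs1]
      by_cases h : i = i1 <;> simp [h]
    · funext i
      have : ∑ j, b i j * v j = -∑ j, b i j * u j := by
        rw [← Finset.sum_neg_distrib]
        exact Finset.sum_congr rfl fun j _ => by rw [hvu j]; ring
      rw [rowM_mulVec, this, hkey i, uv, hc0, hs1]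
      by_cases h : i = i1 <;> simp [h]
  · -- c > 0
    have hcpos : 0 < c := lt_of_le_of_ne hc (Ne.symm hc0)
    set p : Fin n → ℝ := fun i => (1/(2*c)) * u i + (1/(2*c)) * v i with hpdef
    have hpp : dotR p p = 1 := by
      rw [hpdef, dotR_lin, hu, hv, ← htdef]
      have : t = c^2 - s^2 := hts.symm
      rw [this]
      field_simp
      nlinarith [hcs, hcpos]
    have hpq : dotR p q = 0 := by
      rw [hpdef, hqdef, dotR_lin, hu, hv]
      have hvu' : dotR v u = dotR u v := by
        simp only [dotR]; exact Finset.sum_congr rfl fun i _ => by ring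
      field_simp
      ring
    have hupq : ∀ i, u i = c * p i + s * q i := by
      intro i; rw [hpdef, hqdef]; field_simp; ring
    have hvpq : ∀ i, v i = c * p i + (-s) * q i := by
      intro i; rw [hpdef, hqdef]; field_simp; ring
    set w : Fin n → EuclideanSpace ℝ (Fin n) :=
      fun i => if i = i0 then WithLp.toLp 2 p else WithLp.toLp 2 q with hwdef
    have hortho : Orthonormal ℝ (Set.domRestrict {i0, i1} w) := by
      rw [orthonormal_iff_ite]
      rintro ⟨i, hi⟩ ⟨j, hj⟩
      simp only [Set.mem_insert_iff, Set.mem_singleton_iff] at hi hj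
      have hqp : dotR q p = 0 := by
        rw [show dotR q p = dotR p q from
          Finset.sum_congr rfl fun i _ => by ring]
        exact hpq
      rcases hi with rfl | rfl <;> rcases hj with rfl | rfl <;>
        simp only [Set.domRestrict_apply, hwdef, if_pos rfl, if_neg (Ne.symm h01)] <;>
        rw [inner_eq] <;>
        simp [Subtype.mk.injEq, h01, Ne.symm h01] <;>
        first
          | simpa [dotR] using hpp
          | simpa [dotR] using hqq
          | simpa [dotR] using hpq
          | simpa [dotR] using hqp
    obtain ⟨b, hb⟩ := hortho.exists_orthonormalBasis_extension_of_card_eq hcard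
    have hbi0 : (b i0).ofLp = p := by
      have h := hb i0 (by simp)
      rw [hwdef] at h
      simp at h; rw [h]
    have hbi1 : (b i1).ofLp = q := by
      have h := hb i1 (by simp)
      rw [hwdef] at h
      simp [Ne.symm h01] at h; rw [h]
    have hbite := orthonormal_iff_ite.mp b.orthonormal
    have hkeyp : ∀ i : Fin n, ∑ j, b i j * p j = if i = i0 then 1 else 0 := by
      intro i
      have h1 : (inner ℝ (b i) (b i0) : ℝ) = if i = i0 then 1 else 0 := hbite i i0
      rw [inner_eq, hbi0] at h1
      exact h1
    have hkeyq : ∀ i : Fin n, ∑ j, b i j * q j = if i = i1 then 1 else 0 := by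
      intro i
      have h1 : (inner ℝ (b i) (b i1) : ℝ) = if i = i1 then 1 else 0 := hbite i i1
      rw [inner_eq, hbi1] at h1
      exact h1
    have hexp : ∀ (i : Fin n) (α β : ℝ),
        ∑ j, b i j * (α * p j + β * q j)
          = α * (∑ j, b i j * p j) + β * (∑ j, b i j * q j) := by
      intro i α β
      rw [Finset.mul_sum, Finset.mul_sum, ← Finset.sum_add_distrib]
      exact Finset.sum_congr rfl fun j _ => by ring
    refine ⟨rowM ⇑b, c, s, rowM_mem b, hc, hs, hcs, hts, ?_, ?_⟩
    · funext i
      rw [rowM_mulVec]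
      rw [show (fun j => b i j * u j) = fun j => b i j * (c * p j + s * q j) from
        funext fun j => by rw [hupq j]]
      rw [hexp i c s, hkeyp i, hkeyq i, uv]
      by_cases h1 : i = i0 <;> by_cases h2 : i = i1 <;> simp [h1, h2]
    · funext i
      rw [rowM_mulVec]
      rw [show (fun j => b i j * v j) = fun j => b i j * (c * p j + (-s) * q j) from
        funext fun j => by rw [hvpq j]]
      rw [hexp i c (-s), hkeyp i, hkeyq i, uv]
      by_cases h1 : i = i0 <;> by_cases h2 : i = i1 <;> simp [h1, h2]
lemma gam_nonneg (P : Matrix (Fin d) (Fin n) ℝ) (u v : Fin n → ℝ) (huv : dotR u v < 1) :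
    0 ≤ Gam P u v :=
  div_nonneg (sub_nonneg.2 (dotR_le_norR _ _)) (by linarith)

end SecEff

open SecEff

theorem expected_section_efficiency {n d : ℕ} (hn : 2 ≤ n) (hd3 : 3 ≤ d) (hdn : d ≤ n)
    (μ : Measure (Matrix (Fin d) (Fin n) ℝ)) (hμ : IsHaarStiefel μ)
    (u v : Fin n → ℝ) (hu : dotR u u = 1) (hv : dotR v v = 1) (huv : dotR u v < 1) :
    (d : ℝ) / n - 4 * ((n : ℝ) - d) / (n * (n - 1)) ≤ ∫ P, Gam P u v ∂μ ∧
      ∫ P, Gam P u v ∂μ ≤ (d : ℝ) / n := by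
  haveI : IsProbabilityMeasure μ := hμ.1
  have hμ' : HStief μ := ⟨hμ.2.1, hμ.2.2⟩
  set i0 : Fin n := ⟨0, by omega⟩ with hi0
  set i1 : Fin n := ⟨1, by omega⟩ with hi1
  have h01 : i0 ≠ i1 := fun h => absurd (congrArg Fin.val h) (by simp [hi0, hi1])
  obtain ⟨Q, c, s, hQ, hc, hs, hcs, hts, hQu, hQv⟩ := exists_rot h01 u v hu hv huv
  set u' : Fin n → ℝ := uv c s i0 i1 with hu'
  set v' : Fin n → ℝ := uv c (-s) i0 i1 with hv'
  have hdotuv' : dotR u' v' = dotR u v := by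
    rw [hu', hv', dotR_uv _ _ _ _ h01, ← hts]; ring
  -- transfer the integral
  have htrans : ∫ P, Gam P u v ∂μ = ∫ P, Gam P u' v' ∂μ := by
    rw [← int_inv hμ' hQ (f := fun P => Gam P u v) (meas_Gam u v).aestronglyMeasurable]
    refine integral_congr_ae (Filter.Eventually.of_forall fun P => ?_)
    show Gam (P * Q) u v = Gam P u' v'
    rw [Gam, Gam, ← Matrix.mulVec_mulVec, ← Matrix.mulVec_mulVec, hQu, hQv, hdotuv']
  have hvu'lt : dotR u' v' < 1 := by rw [hdotuv']; exact huv
  -- integrability of Gam u' v'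
  have hintM : Integrable (fun P => Mf P i1 i1) μ := integrable_Mf_diag hμ' i1
  have hintGam : Integrable (fun P => Gam P u' v') μ := by
    refine hintM.mono (meas_Gam u' v').aestronglyMeasurable ?_
    refine Filter.Eventually.of_forall fun P => ?_
    rw [Real.norm_eq_abs, Real.norm_eq_abs, abs_of_nonneg (gam_nonneg P u' v' hvu'lt)]
    exact le_trans (gam_le P h01 hs hcs) (le_abs_self _)
  have hintW : Integrable (fun P => Wf P i0 i1) μ := integrable_Wf hμ' (Ne.symm h01)
  have hIM : ∫ P, Mf P i1 i1 ∂μ = (d:ℝ)/n := int_Mf_diag hμ' (by omega) i1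
  constructor
  · -- lower bound
    have hmono : ∫ P, (Mf P i1 i1 - 2 * Wf P i0 i1) ∂μ ≤ ∫ P, Gam P u' v' ∂μ := by
      refine integral_mono (hintM.sub (hintW.const_mul 2)) hintGam fun P => ?_
      exact gam_ge P h01 hc hs hcs
    have hval : ∫ P, (Mf P i1 i1 - 2 * Wf P i0 i1) ∂μ
        = (d:ℝ)/n - 2 * ∫ P, Wf P i0 i1 ∂μ := by
      rw [integral_sub hintM (hintW.const_mul 2), hIM, MeasureTheory.integral_const_mul]
    have hWle : ∫ P, Wf P i0 i1 ∂μ ≤ ((n:ℝ) - d) / (n * (n - 1)) :=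
      int_Wf_le hμ' (by omega) hdn (Ne.symm h01)
    have hWpos : (0:ℝ) ≤ ((n:ℝ) - d) / (n * (n - 1)) := by
      have h1 : (0:ℝ) ≤ (n:ℝ) - d := by
        have : (d:ℝ) ≤ n := by exact_mod_cast hdn
        linarith
      have h2 : (0:ℝ) < (n:ℝ) * ((n:ℝ) - 1) := by
        have : (2:ℝ) ≤ (n:ℝ) := by exact_mod_cast hn
        nlinarith
      positivity
    rw [htrans]
    have : 4 * ((n : ℝ) - d) / (n * (n - 1)) = 4 * (((n:ℝ) - d) / (n * (n - 1))) := by ring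
    rw [this]
    linarith [hmono, hval, hWle, hWpos]
  · -- upper bound
    rw [htrans]
    have hmono : ∫ P, Gam P u' v' ∂μ ≤ ∫ P, Mf P i1 i1 ∂μ :=
      integral_mono hintGam hintM fun P => gam_le P h01 hs hcs
    rw [hIM] at hmono
    exact hmono
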